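/- Let S ∈ ℝ^{m×n} be an α-sparse matrix (each row has at most αn nonzeros, each column at most αm nonzeros), and let I ⊆ [m] be a set of |I| row indices drawn uniformly at random with replacement, with α|I| ≥ (16/3)·log n. Then with probability at least 1 − 1/n, the row submatrix R = S(I,:) has at most 2α|I| nonzero entries in every column (and hence at most αn nonzeros in every row), i.e., R is 2α-sparse. -/

import Mathlib

open Matrix BigOperators MeasureTheory

noncomputable def specNorm {m n : ℕ} (A : Matrix (Fin m) (Fin n) ℝ) : ℝ :=
  ‖LinearMap.toContinuousLinearMap (Matrix.toEuclideanLin A)‖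

def IsMPInv {m n : ℕ} (A : Matrix (Fin m) (Fin n) ℝ) (B : Matrix (Fin n) (Fin m) ℝ) : Prop :=
  A * B * A = A ∧ B * A * B = B ∧ (A * B)ᵀ = A * B ∧ (B * A)ᵀ = B * A

noncomputable def rowNorm {m n : ℕ} (A : Matrix (Fin m) (Fin n) ℝ) (i : Fin m) : ℝ :=
  Real.sqrt (∑ j, (A i j) ^ 2)

noncomputable def entryMax {m n : ℕ} (A : Matrix (Fin m) (Fin n) ℝ) : ℝ :=
  ⨆ i, ⨆ j, |A i j|

open Finset in

lemma chernoff_count (m k : ℕ) (α : ℝ) (hα : 0 ≤ α)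
    (B : Finset (Fin m)) (hB : (B.card : ℝ) ≤ α * m) :
    ((Finset.univ.filter (fun ι : Fin k → Fin m =>
        2 * α * k < ((Finset.univ.filter (fun t => ι t ∈ B)).card : ℝ))).card : ℝ)
      ≤ (m:ℝ)^k * Real.exp (-(3/8) * (α*k)) := by
  classical
  set X : (Fin k → Fin m) → ℕ := fun ι => (Finset.univ.filter (fun t => ι t ∈ B)).card with hX
  set E := Finset.univ.filter (fun ι : Fin k → Fin m => 2 * α * k < (X ι : ℝ)) with hE
  -- step: 2^(X ι) = ∏ over t
  have hprod : ∀ ι : Fin k → Fin m, (2:ℝ)^(X ι) = ∏ t : Fin k, (if ι t ∈ B then (2:ℝ) else 1) := by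
    intro ι
    have hXs : X ι = ∑ t : Fin k, (if ι t ∈ B then 1 else 0) := Finset.card_filter _ _
    rw [hXs, ← Finset.prod_pow_eq_pow_sum]
    apply Finset.prod_congr rfl
    intro t _
    by_cases h : ι t ∈ B <;> simp [h]
  -- step: total sum
  have hsum : ∑ ι : Fin k → Fin m, (2:ℝ)^(X ι) = ((m:ℝ) + B.card)^k := by
    have : ∑ ι : Fin k → Fin m, (2:ℝ)^(X ι)
        = ∑ ι ∈ Fintype.piFinset (fun _ : Fin k => (Finset.univ : Finset (Fin m))),
            ∏ t : Fin k, (if ι t ∈ B then (2:ℝ) else 1) := by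
      rw [Fintype.piFinset_univ]
      exact Finset.sum_congr rfl fun ι _ => hprod ι
    rw [this, Finset.sum_prod_piFinset (Finset.univ : Finset (Fin m))
      (fun (_ : Fin k) (x : Fin m) => if x ∈ B then (2:ℝ) else 1)]
    have hcol : ∑ i : Fin m, (if i ∈ B then (2:ℝ) else 1) = (m:ℝ) + B.card := by
      have : ∀ i : Fin m, (if i ∈ B then (2:ℝ) else 1) = 1 + (if i ∈ B then (1:ℝ) else 0) := by
        intro i; by_cases h : i ∈ B <;> simp [h]; norm_num
      simp_rw [this, Finset.sum_add_distrib]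
      simp [Finset.sum_ite_mem]
    rw [Finset.prod_congr rfl fun t _ => hcol, Finset.prod_const, Finset.card_univ,
      Fintype.card_fin]
  -- step: lower bound on each term of E
  have hterm : ∀ ι ∈ E, Real.exp ((2*α*k) * Real.log 2) ≤ (2:ℝ)^(X ι) := by
    intro ι hι
    rw [hE, Finset.mem_filter] at hι
    have h2 : (2:ℝ)^(X ι) = Real.exp ((X ι : ℝ) * Real.log 2) := by
      rw [Real.exp_nat_mul, Real.exp_log two_pos]
    rw [h2]
    exact Real.exp_le_exp.mpr (mul_le_mul_of_nonneg_right hι.2.le (Real.log_nonneg one_le_two))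
  have hEcard : (E.card : ℝ) * Real.exp ((2*α*k) * Real.log 2) ≤ ((m:ℝ) + B.card)^k := by
    rw [← hsum]
    calc (E.card : ℝ) * Real.exp ((2*α*k) * Real.log 2)
        = ∑ _ι ∈ E, Real.exp ((2*α*k) * Real.log 2) := by rw [Finset.sum_const, nsmul_eq_mul]
      _ ≤ ∑ ι ∈ E, (2:ℝ)^(X ι) := Finset.sum_le_sum hterm
      _ ≤ ∑ ι : Fin k → Fin m, (2:ℝ)^(X ι) :=
          Finset.sum_le_sum_of_subset_of_nonneg (Finset.filter_subset _ _)
            (fun i _ _ => by positivity)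
  -- step: (m + b)^k ≤ m^k exp(αk)
  have hmb : ((m:ℝ) + B.card)^k ≤ (m:ℝ)^k * Real.exp (α * k) := by
    have h1 : (m:ℝ) + B.card ≤ (m:ℝ) * Real.exp α := by
      have := Real.add_one_le_exp α
      nlinarith [(Nat.cast_nonneg m : (0:ℝ) ≤ m), hB]
    calc ((m:ℝ) + B.card)^k ≤ ((m:ℝ) * Real.exp α)^k := by
          apply pow_le_pow_left₀ (by positivity) h1
      _ = (m:ℝ)^k * Real.exp (α * k) := by
          rw [mul_pow, mul_comm α (k:ℝ), Real.exp_nat_mul]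
  -- combine
  have hexp : (0:ℝ) < Real.exp ((2*α*k) * Real.log 2) := Real.exp_pos _
  have hfinal : (E.card : ℝ) ≤ (m:ℝ)^k * Real.exp (α*k - (2*α*k) * Real.log 2) := by
    rw [Real.exp_sub, ← mul_div_assoc, le_div_iff₀ hexp]
    exact hEcard.trans hmb
  refine hfinal.trans (mul_le_mul_of_nonneg_left (Real.exp_le_exp.mpr ?_) (by positivity))
  have hlog : (0.6931471803:ℝ) < Real.log 2 := Real.log_two_gt_d9
  nlinarith [mul_nonneg hα (Nat.cast_nonneg k)]
theorem stmt12 (m n k : ℕ) (hm : 0 < m) (hn : 0 < n) (hk : 0 < k) (α : ℝ)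
    (S : Matrix (Fin m) (Fin n) ℝ)
    (hrow : ∀ i, ((Finset.univ.filter (fun j => S i j ≠ 0)).card : ℝ) ≤ α * n)
    (hcol : ∀ j, ((Finset.univ.filter (fun i => S i j ≠ 0)).card : ℝ) ≤ α * m)
    (hαk : (16 / 3) * Real.log n ≤ α * k) :
    ENNReal.ofReal (1 - 1 / n) ≤
      (@PMF.uniformOfFintype (Fin k → Fin m) _ ⟨fun _ => ⟨0, hm⟩⟩).toMeasure
        {ι | ∀ j : Fin n,
          ((Finset.univ.filter (fun t : Fin k => S (ι t) j ≠ 0)).card : ℝ) ≤ 2 * α * k} := by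
  classical
  haveI hne : Nonempty (Fin k → Fin m) := ⟨fun _ => ⟨0, hm⟩⟩
  have hm' : (0:ℝ) < m := by exact_mod_cast hm
  have hn' : (0:ℝ) < n := by exact_mod_cast hn
  have hα : 0 ≤ α := by
    have h := hcol ⟨0, hn⟩
    have h0 : (0:ℝ) ≤ ((Finset.univ.filter (fun i => S i ⟨0, hn⟩ ≠ 0)).card : ℝ) :=
      Nat.cast_nonneg _
    nlinarith
  set P : (Fin k → Fin m) → Prop := fun ι => ∀ j : Fin n,
    ((Finset.univ.filter (fun t : Fin k => S (ι t) j ≠ 0)).card : ℝ) ≤ 2 * α * k with hP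
  set G : Set (Fin k → Fin m) := {ι | P ι} with hG
  have hmeas : MeasurableSet G := (Set.toFinite G).measurableSet
  rw [PMF.toMeasure_uniformOfFintype_apply G hmeas]
  have hcardG : Fintype.card G = (Finset.univ.filter P).card := by
    rw [← Set.toFinset_card]
    congr 1
    ext ι
    simp [hG]
  -- counting
  set goodF := Finset.univ.filter P with hgoodF
  set badF := Finset.univ.filter (fun ι => ¬ P ι) with hbadF
  have hNcard : Fintype.card (Fin k → Fin m) = m ^ k := by
    rw [Fintype.card_fun, Fintype.card_fin, Fintype.card_fin]
  have hsplit : goodF.card + badF.card = m ^ k := by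
    rw [hgoodF, hbadF, Finset.card_filter_add_card_filter_not, Finset.card_univ, hNcard]
  -- union bound
  have hbad : (badF.card : ℝ) ≤ (n:ℝ) * ((m:ℝ)^k * Real.exp (-(3/8) * (α*k))) := by
    have hsub : badF ⊆ Finset.univ.biUnion (fun j : Fin n =>
        Finset.univ.filter (fun ι : Fin k → Fin m =>
          2 * α * k < ((Finset.univ.filter (fun t => ι t ∈
            (Finset.univ.filter (fun i => S i j ≠ 0)))).card : ℝ))) := by
      intro ι hι
      rw [hbadF] at hι
      simp only [Finset.mem_filter, hP, not_forall, not_le] at hι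
      obtain ⟨j, hj⟩ := hι.2
      rw [Finset.mem_biUnion]
      refine ⟨j, Finset.mem_univ _, Finset.mem_filter.mpr ⟨Finset.mem_univ _, ?_⟩⟩
      convert hj using 4 with t
      · rfl
      simp
    have h1 : (badF.card : ℝ) ≤ ∑ j : Fin n, (((Finset.univ.filter (fun ι : Fin k → Fin m =>
        2 * α * k < ((Finset.univ.filter (fun t => ι t ∈
          (Finset.univ.filter (fun i => S i j ≠ 0)))).card : ℝ))).card : ℝ)) := by
      have := (Finset.card_le_card hsub).trans (Finset.card_biUnion_le)
      exact_mod_cast this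
    refine h1.trans ?_
    have h2 : ∀ j : Fin n, ((Finset.univ.filter (fun ι : Fin k → Fin m =>
        2 * α * k < ((Finset.univ.filter (fun t => ι t ∈
          (Finset.univ.filter (fun i => S i j ≠ 0)))).card : ℝ))).card : ℝ)
        ≤ (m:ℝ)^k * Real.exp (-(3/8) * (α*k)) := by
      intro j
      exact chernoff_count m k α hα _ (hcol j)
    calc _ ≤ ∑ _j : Fin n, (m:ℝ)^k * Real.exp (-(3/8) * (α*k)) := Finset.sum_le_sum fun j _ => h2 j
      _ = (n:ℝ) * ((m:ℝ)^k * Real.exp (-(3/8) * (α*k))) := by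
          rw [Finset.sum_const, Finset.card_univ, Fintype.card_fin, nsmul_eq_mul]
  have hexpn : Real.exp (-(3/8) * (α*k)) ≤ 1 / (n:ℝ)^2 := by
    have h1 : Real.exp (-(3/8) * (α*k)) ≤ Real.exp (-(2 * Real.log n)) := by
      apply Real.exp_le_exp.mpr
      nlinarith
    refine h1.trans ?_
    rw [Real.exp_neg, two_mul, Real.exp_add, Real.exp_log hn']
    rw [one_div, sq]
  have hbad2 : (badF.card : ℝ) ≤ (m:ℝ)^k / n := by
    have := hbad.trans (by
      have : (n:ℝ) * ((m:ℝ)^k * Real.exp (-(3/8) * (α*k)))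
          ≤ (n:ℝ) * ((m:ℝ)^k * (1 / (n:ℝ)^2)) := by
        apply mul_le_mul_of_nonneg_left _ hn'.le
        exact mul_le_mul_of_nonneg_left hexpn (by positivity)
      exact this)
    calc (badF.card : ℝ) ≤ (n:ℝ) * ((m:ℝ)^k * (1 / (n:ℝ)^2)) := this
      _ = (m:ℝ)^k / n := by field_simp
  have hgood : (1 - 1/(n:ℝ)) * (m:ℝ)^k ≤ (goodF.card : ℝ) := by
    have hs : (goodF.card : ℝ) + (badF.card : ℝ) = (m:ℝ)^k := by exact_mod_cast hsplit
    have e : (1 - 1/(n:ℝ)) * (m:ℝ)^k = (m:ℝ)^k - (m:ℝ)^k/n := by ring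
    linarith
  -- final ENNReal step
  have hN0 : (Fintype.card (Fin k → Fin m)) ≠ 0 := by rw [hNcard]; exact pow_ne_zero k hm.ne'
  rw [ENNReal.le_div_iff_mul_le (Or.inl (by simpa using hN0))
    (Or.inl (ENNReal.natCast_ne_top _))]
  rw [← ENNReal.ofReal_natCast (Fintype.card (Fin k → Fin m)),
    ← ENNReal.ofReal_mul (by
      have : 1/(n:ℝ) ≤ 1 := by
        rw [div_le_one hn']; exact_mod_cast hn
      linarith),
    ← ENNReal.ofReal_natCast]
  apply ENNReal.ofReal_le_ofReal
  rw [Fintype.card_eq_nat_card] at hcardG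
  rw [hNcard, Fintype.card_eq_nat_card, hcardG]
  calc (1 - 1/(n:ℝ)) * ((m^k : ℕ) : ℝ) = (1 - 1/(n:ℝ)) * (m:ℝ)^k := by push_cast; ring
    _ ≤ (goodF.card : ℝ) := hgood
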